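/- Let Σ ∈ ℝ^{k×k} and let d₁, d₂ ∈ ℝ^k (in the incremental SVD these are d₁ = Qᵀ W u_{ℓ+1} and d₂ = Qᵀ W u_{ℓ+2}). Suppose [Σ | d₁] = Q₍₁₎ Σ₍₁₎ R₍₁₎ᵀ is a thin SVD, with Q₍₁₎ ∈ ℝ^{k×k} orthogonal (Q₍₁₎ᵀ Q₍₁₎ = Q₍₁₎ Q₍₁₎ᵀ = I_k), Σ₍₁₎ ∈ ℝ^{k×k} diagonal with nonnegative entries, and R₍₁₎ ∈ ℝ^{(k+1)×k} with R₍₁₎ᵀ R₍₁₎ = I_k; and suppose [Σ₍₁₎ | Q₍₁₎ᵀ d₂] = Q₍₂₎ Σ₍₂₎ R₍₂₎ᵀ is likewise a thin SVD. Define Q̃ = Q₍₁₎ Q₍₂₎, Σ̃ = Σ₍₂₎, and R̃ = [[R₍₁₎, 0],[0, 1]] R₍₂₎ ∈ ℝ^{(k+2)×k}. Then [Σ | d₁ | d₂] = Q̃ Σ̃ R̃ᵀ, and this is a thin SVD: Q̃ᵀ Q̃ = I_k, R̃ᵀ R̃ = I_k, and Σ̃ is diagonal with nonnegative entries. -/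

import Mathlib

open Matrix

noncomputable section

/-- `[A | b]`: the matrix obtained by appending the column `b` to the matrix `A`. -/
def appendCol {m n : Type*} (A : Matrix m n ℝ) (b : m → ℝ) :
    Matrix m (n ⊕ Fin 1) ℝ :=
  Matrix.of fun i => Sum.elim (A i) fun _ => b i

lemma mul_appendCol {m n p : Type*} [Fintype n] (A : Matrix m n ℝ)
    (B : Matrix n p ℝ) (v : n → ℝ) :
    A * appendCol B v = appendCol (A * B) (A *ᵥ v) := by
  ext i j
  cases j with
  | inl j => simp [appendCol, mul_apply]
  | inr j => simp [appendCol, mul_apply, mulVec, dotProduct]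

lemma appendCol_mul_fromBlocks {m n p : Type*} [Fintype n] [DecidableEq n]
    (X : Matrix m n ℝ) (v : m → ℝ) (N : Matrix n p ℝ) :
    appendCol X v * fromBlocks N 0 0 (1 : Matrix (Fin 1) (Fin 1) ℝ) = appendCol (X * N) v := by
  ext i j
  cases j with
  | inl j =>
    simp [appendCol, mul_apply, fromBlocks, Fintype.sum_sum_type, mul_apply]
  | inr j =>
    simp [appendCol, mul_apply, fromBlocks, Fintype.sum_sum_type,
      Matrix.one_apply, Fin.eq_zero j]

theorem stmt4 {k : ℕ}
    (S : Matrix (Fin k) (Fin k) ℝ) (d1 d2 : Fin k → ℝ)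
    (Q1 : Matrix (Fin k) (Fin k) ℝ) (s1 : Fin k → ℝ)
    (R1 : Matrix (Fin k ⊕ Fin 1) (Fin k) ℝ)
    (hQ1 : Q1ᵀ * Q1 = 1) (hQ1' : Q1 * Q1ᵀ = 1)
    (hs1 : ∀ i, 0 ≤ s1 i) (hR1 : R1ᵀ * R1 = 1)
    (hSVD1 : appendCol S d1 = Q1 * diagonal s1 * R1ᵀ)
    (Q2 : Matrix (Fin k) (Fin k) ℝ) (s2 : Fin k → ℝ)
    (R2 : Matrix (Fin k ⊕ Fin 1) (Fin k) ℝ)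
    (hQ2 : Q2ᵀ * Q2 = 1) (hQ2' : Q2 * Q2ᵀ = 1)
    (hs2 : ∀ i, 0 ≤ s2 i) (hR2 : R2ᵀ * R2 = 1)
    (hSVD2 : appendCol (diagonal s1) (Q1ᵀ *ᵥ d2) = Q2 * diagonal s2 * R2ᵀ) :
    appendCol (appendCol S d1) d2 =
      (Q1 * Q2) * diagonal s2 *
        ((fromBlocks R1 0 0 1 :
            Matrix ((Fin k ⊕ Fin 1) ⊕ Fin 1) (Fin k ⊕ Fin 1) ℝ) * R2)ᵀ ∧
    (Q1 * Q2)ᵀ * (Q1 * Q2) = 1 ∧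
    ((fromBlocks R1 0 0 1 :
        Matrix ((Fin k ⊕ Fin 1) ⊕ Fin 1) (Fin k ⊕ Fin 1) ℝ) * R2)ᵀ *
      ((fromBlocks R1 0 0 1 :
        Matrix ((Fin k ⊕ Fin 1) ⊕ Fin 1) (Fin k ⊕ Fin 1) ℝ) * R2) = 1 ∧
    (∀ i, 0 ≤ s2 i) := by
  refine ⟨?_, ?_, ?_, hs2⟩
  · have h1 : Q1 * Q2 * diagonal s2 * R2ᵀ = appendCol (Q1 * diagonal s1) d2 := by
      calc Q1 * Q2 * diagonal s2 * R2ᵀ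
          = Q1 * (Q2 * diagonal s2 * R2ᵀ) := by
            rw [Matrix.mul_assoc, Matrix.mul_assoc, Matrix.mul_assoc]
        _ = Q1 * appendCol (diagonal s1) (Q1ᵀ *ᵥ d2) := by rw [hSVD2]
        _ = appendCol (Q1 * diagonal s1) (Q1 *ᵥ (Q1ᵀ *ᵥ d2)) := mul_appendCol ..
        _ = appendCol (Q1 * diagonal s1) d2 := by
            rw [mulVec_mulVec, hQ1', one_mulVec]
    rw [transpose_mul, fromBlocks_transpose, transpose_zero, transpose_zero,
      transpose_one, ← Matrix.mul_assoc, h1, appendCol_mul_fromBlocks, ← hSVD1]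
  · rw [transpose_mul, mul_assoc, ← mul_assoc Q1ᵀ, hQ1, one_mul, hQ2]
  · rw [transpose_mul, Matrix.mul_assoc, ← Matrix.mul_assoc (fromBlocks R1 0 0 1)ᵀ,
      fromBlocks_transpose, transpose_zero, transpose_zero, transpose_one,
      fromBlocks_multiply]
    simp only [Matrix.mul_zero, Matrix.zero_mul, Matrix.one_mul, add_zero,
      zero_add, hR1]
    rw [fromBlocks_one, Matrix.one_mul, hR2]
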